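/- Assume k is a field and a + b ≤ n. Then the k-vector space of S_n-equivariant linear maps V^{⊗a} → V^{⊗b} has dimension equal to the number of set partitions of a set with a + b elements (the Bell number B(a+b)), with basis the family (T_P) indexed by partition diagrams P of type (a,b). -/

import Mathlib

open scoped Classical

/-- A partition diagram of type `(a,b)`: a set partition of `Fin a ⊕ Fin b`
into nonempty blocks. -/
abbrev PartitionDiagram (a b : ℕ) :=
  Finpartition (Finset.univ : Finset (Fin a ⊕ Fin b))

/-- `Sum.elim f g` is constant on every block of `P`. -/
def Compatible {n a b : ℕ} (P : PartitionDiagram a b)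
    (f : Fin a → Fin n) (g : Fin b → Fin n) : Prop :=
  ∀ B ∈ P.parts, ∀ x ∈ B, ∀ y ∈ B, Sum.elim f g x = Sum.elim f g y

/-- The linear map `T_P : V^{⊗a} → V^{⊗b}` associated to a partition diagram `P`,
where `V^{⊗a}` is modelled as the free module on `Fin a → Fin n`, with basis vector
at `f` corresponding to `e_{f(1)} ⊗ ⋯ ⊗ e_{f(a)}`. -/
noncomputable def TP (k : Type*) [CommRing k] (n : ℕ) {a b : ℕ}
    (P : PartitionDiagram a b) :
    ((Fin a → Fin n) → k) →ₗ[k] ((Fin b → Fin n) → k) where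
  toFun x g := ∑ f : Fin a → Fin n, if Compatible P f g then x f else 0
  map_add' x y := by
    funext g
    simp only [Pi.add_apply]
    rw [← Finset.sum_add_distrib]
    exact Finset.sum_congr rfl fun f _ => by split <;> simp
  map_smul' c x := by
    funext g
    simp only [Pi.smul_apply, smul_eq_mul, RingHom.id_apply]
    rw [Finset.mul_sum]
    exact Finset.sum_congr rfl fun f _ => by split <;> simp

/-- The (diagonal) action of `σ ∈ S_n` on `V^{⊗a}`: on basis vectors it sends
`e_{f(1)} ⊗ ⋯ ⊗ e_{f(a)}` to `e_{σ(f(1))} ⊗ ⋯ ⊗ e_{σ(f(a))}`. -/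
def permMap (k : Type*) [CommRing k] {n a : ℕ} (σ : Equiv.Perm (Fin n)) :
    ((Fin a → Fin n) → k) →ₗ[k] ((Fin a → Fin n) → k) where
  toFun x f := x fun i => σ⁻¹ (f i)
  map_add' _ _ := rfl
  map_smul' _ _ := rfl


/-- The submodule of `S_n`-equivariant `k`-linear maps `V^{⊗a} → V^{⊗b}`. -/
def equivariantMaps (k : Type*) [CommRing k] (n a b : ℕ) :
    Submodule k (((Fin a → Fin n) → k) →ₗ[k] ((Fin b → Fin n) → k)) where
  carrier := {F | ∀ (σ : Equiv.Perm (Fin n)) (x : (Fin a → Fin n) → k),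
    F (permMap k σ x) = permMap k σ (F x)}
  add_mem' := by
    intro F G hF hG σ x
    simp only [LinearMap.add_apply, hF σ x, hG σ x, map_add]
  zero_mem' := by
    intro σ x
    simp
  smul_mem' := by
    intro c F hF σ x
    simp only [LinearMap.smul_apply, hF σ x, map_smul]


namespace Stmt10Aux

open Finset

variable {X : Type*} [Fintype X] [DecidableEq X] {n : ℕ}

/-- kernel partition of a map -/
noncomputable def fker (h : X → Fin n) : Finpartition (Finset.univ : Finset X) :=
  Finpartition.ofSetoid (Setoid.ker h)

lemma mem_part_fker {h : X → Fin n} {x y : X} : y ∈ (fker h).part x ↔ h x = h y :=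
  Finpartition.mem_part_ofSetoid_iff_rel

lemma parts_eq_image_part (P : Finpartition (Finset.univ : Finset X)) :
    P.parts = Finset.univ.image P.part := by
  ext t
  simp only [Finset.mem_image]
  constructor
  · intro ht
    obtain ⟨x, -, hx⟩ := P.part_surjOn ht
    exact ⟨x, Finset.mem_univ x, hx⟩
  · rintro ⟨x, -, rfl⟩
    exact P.part_mem.mpr (Finset.mem_univ x)

lemma ext_of_part {P Q : Finpartition (Finset.univ : Finset X)}
    (h : ∀ x, P.part x = Q.part x) : P = Q := by
  ext1
  rw [parts_eq_image_part P, parts_eq_image_part Q]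
  exact Finset.image_congr fun x _ => h x

lemma fker_eq_iff {h h' : X → Fin n} :
    fker h = fker h' ↔ ∀ x y, h x = h y ↔ h' x = h' y := by
  constructor
  · intro H x y
    rw [← mem_part_fker, H, mem_part_fker]
  · intro H
    refine ext_of_part fun x => Finset.ext fun y => ?_
    rw [mem_part_fker, mem_part_fker, H]

lemma fker_eq_of_rel {h : X → Fin n} {P : Finpartition (Finset.univ : Finset X)}
    (H : ∀ x y, h x = h y ↔ P.part x = P.part y) : fker h = P := by
  refine ext_of_part fun x => Finset.ext fun y => ?_
  rw [mem_part_fker, H,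
    P.mem_part_iff_part_eq_part (Finset.mem_univ y) (Finset.mem_univ x), eq_comm]

lemma exists_rep (P : Finpartition (Finset.univ : Finset X)) (hn : Fintype.card X ≤ n) :
    ∃ h : X → Fin n, fker h = P := by
  have hcard : Fintype.card {t // t ∈ P.parts} ≤ Fintype.card (Fin n) := by
    rw [Fintype.card_coe, Fintype.card_fin]
    exact le_trans (le_trans P.card_parts_le_card (by simp)) hn
  obtain ⟨emb⟩ := Function.Embedding.nonempty_of_card_le hcard
  refine ⟨fun x => emb ⟨P.part x, P.part_mem.mpr (Finset.mem_univ x)⟩, fker_eq_of_rel fun x y => ?_⟩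
  rw [emb.injective.eq_iff, Subtype.mk.injEq]

lemma exists_perm {h h' : X → Fin n} (H : ∀ x y, h x = h y ↔ h' x = h' y) :
    ∃ σ : Equiv.Perm (Fin n), σ ∘ h = h' := by
  classical
  set p : Fin n → Prop := fun v => ∃ x, h x = v with hp
  set q : Fin n → Prop := fun v => ∃ x, h' x = v with hq
  have key : ∀ (v : {v // p v}), h' v.2.choose = h' v.2.choose := fun _ => rfl
  set u : {v // p v} → {v // q v} := fun v => ⟨h' v.2.choose, v.2.choose, rfl⟩ with hu
  have hbij : Function.Bijective u := by
    constructor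
    · rintro ⟨v₁, hv₁⟩ ⟨v₂, hv₂⟩ he
      have : h' hv₁.choose = h' hv₂.choose := congrArg Subtype.val he
      have : h hv₁.choose = h hv₂.choose := (H _ _).mpr this
      exact Subtype.ext (hv₁.choose_spec.symm.trans (this.trans hv₂.choose_spec))
    · rintro ⟨w, hw⟩
      refine ⟨⟨h hw.choose, hw.choose, rfl⟩, Subtype.ext ?_⟩
      have : h (⟨h hw.choose, hw.choose, rfl⟩ : {v // p v}).2.choose = h hw.choose :=
        (⟨h hw.choose, hw.choose, rfl⟩ : {v // p v}).2.choose_spec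
      simpa [hu] using ((H _ _).mp this).trans hw.choose_spec
  set e : {v // p v} ≃ {v // q v} := Equiv.ofBijective u hbij with he
  refine ⟨e.extendSubtype, funext fun x => ?_⟩
  have hx : p (h x) := ⟨x, rfl⟩
  have := e.extendSubtype_apply_of_mem (h x) hx
  rw [Function.comp_apply, this]
  show h' (hx.choose) = h' x
  exact (H _ _).mp hx.choose_spec

lemma fker_comp (σ : Equiv.Perm (Fin n)) (h : X → Fin n) : fker (σ ∘ h) = fker h :=
  fker_eq_iff.mpr fun x y => by simp

end Stmt10Aux

namespace Stmt10Aux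

variable (k : Type*) [CommRing k] (n : ℕ) {a b : ℕ}

/-- delta function -/
noncomputable def delta (f : Fin a → Fin n) : (Fin a → Fin n) → k :=
  fun f' => if f' = f then 1 else 0

lemma sum_delta (x : (Fin a → Fin n) → k) :
    ∑ f : Fin a → Fin n, x f • delta k n f = x := by
  funext f'
  rw [Finset.sum_apply]
  simp only [Pi.smul_apply, delta, smul_eq_mul, mul_ite, mul_one, mul_zero]
  rw [Finset.sum_ite_eq Finset.univ f' x]
  simp

/-- generic matrix map -/
noncomputable def matMap (M : (Fin a → Fin n) → (Fin b → Fin n) → Prop) :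
    ((Fin a → Fin n) → k) →ₗ[k] ((Fin b → Fin n) → k) where
  toFun x g := ∑ f : Fin a → Fin n, if M f g then x f else 0
  map_add' x y := by
    funext g
    simp only [Pi.add_apply]
    rw [← Finset.sum_add_distrib]
    exact Finset.sum_congr rfl fun f _ => by split <;> simp
  map_smul' c x := by
    funext g
    simp only [Pi.smul_apply, smul_eq_mul, RingHom.id_apply]
    rw [Finset.mul_sum]
    exact Finset.sum_congr rfl fun f _ => by split <;> simp

lemma TP_eq_matMap (P : PartitionDiagram a b) : TP k n P = matMap k n (Compatible P) := rfl

lemma matMap_delta (M : (Fin a → Fin n) → (Fin b → Fin n) → Prop)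
    (f0 : Fin a → Fin n) (g : Fin b → Fin n) :
    matMap k n M (delta k n f0) g = if M f0 g then 1 else 0 := by
  show (∑ f : Fin a → Fin n, if M f g then delta k n f0 f else 0) = _
  have : ∀ f : Fin a → Fin n, (if M f g then delta k n f0 f else 0)
      = if f = f0 then (if M f g then (1:k) else 0) else 0 := by
    intro f
    unfold delta
    split <;> split <;> simp_all
  simp only [this]
  rw [Finset.sum_ite_eq' Finset.univ f0 (fun f => if M f g then (1:k) else 0)]
  simp

lemma permMap_comp_apply (σ : Equiv.Perm (Fin n)) (x : (Fin a → Fin n) → k)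
    (f : Fin a → Fin n) : permMap k σ x f = x (⇑σ⁻¹ ∘ f) := rfl

lemma permMap_delta (σ : Equiv.Perm (Fin n)) (f0 : Fin a → Fin n) :
    permMap k σ (delta k n f0) = delta k n (⇑σ ∘ f0) := by
  funext f
  show delta k n f0 (⇑σ⁻¹ ∘ f) = delta k n (⇑σ ∘ f0) f
  unfold delta
  have : ⇑σ⁻¹ ∘ f = f0 ↔ f = ⇑σ ∘ f0 := by
    constructor
    · rintro rfl; funext i; simp
    · rintro rfl; funext i; simp
  simp only [this]

lemma matMap_mem (M : (Fin a → Fin n) → (Fin b → Fin n) → Prop)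
    (hM : ∀ (σ : Equiv.Perm (Fin n)) f g, M (⇑σ ∘ f) (⇑σ ∘ g) ↔ M f g) :
    matMap k n M ∈ equivariantMaps k n a b := by
  intro σ x
  funext g
  show (∑ f : Fin a → Fin n, if M f g then permMap k σ x f else 0)
      = ∑ f : Fin a → Fin n, if M f (⇑σ⁻¹ ∘ g) then x f else 0
  rw [Fintype.sum_equiv (Equiv.arrowCongr (Equiv.refl (Fin a)) σ)
    (fun f => if M f (⇑σ⁻¹ ∘ g) then x f else 0)
    (fun f => if M f g then permMap k σ x f else 0)]
  intro f
  have h1 : (Equiv.arrowCongr (Equiv.refl (Fin a)) σ) f = ⇑σ ∘ f := rfl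
  rw [h1, permMap_comp_apply]
  have h2 : ⇑σ⁻¹ ∘ (⇑σ ∘ f) = f := by funext i; simp
  rw [h2]
  have h3 : M (⇑σ ∘ f) g ↔ M f (⇑σ⁻¹ ∘ g) := by
    have := hM σ f (⇑σ⁻¹ ∘ g)
    have h4 : ⇑σ ∘ (⇑σ⁻¹ ∘ g) = g := by funext i; simp
    rw [h4] at this
    exact this
  rw [if_congr h3.symm rfl rfl]

lemma compatible_perm (σ : Equiv.Perm (Fin n)) (P : PartitionDiagram a b)
    (f : Fin a → Fin n) (g : Fin b → Fin n) :
    Compatible P (⇑σ ∘ f) (⇑σ ∘ g) ↔ Compatible P f g := by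
  have he : Sum.elim (⇑σ ∘ f) (⇑σ ∘ g) = ⇑σ ∘ Sum.elim f g := by
    funext x; cases x <;> rfl
  unfold Compatible
  rw [he]
  constructor
  · intro H B hB x hx y hy
    exact σ.injective (H B hB x hx y hy)
  · intro H B hB x hx y hy
    exact congrArg σ (H B hB x hx y hy)

lemma compatible_iff_le (P : PartitionDiagram a b) (f : Fin a → Fin n) (g : Fin b → Fin n) :
    Compatible P f g ↔ P ≤ fker (Sum.elim f g) := by
  constructor
  · intro H B hB
    obtain ⟨x, hx⟩ := P.nonempty_of_mem_parts hB
    refine ⟨(fker (Sum.elim f g)).part x, (fker (Sum.elim f g)).part_mem.mpr (Finset.mem_univ x), ?_⟩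
    intro y hy
    exact mem_part_fker.mpr (H B hB x hx y hy)
  · intro H B hB x hx y hy
    obtain ⟨u, hu, hBu⟩ := H hB
    have hxu : x ∈ u := hBu hx
    have hyu : y ∈ u := hBu hy
    have : u = (fker (Sum.elim f g)).part x :=
      ((fker (Sum.elim f g)).part_eq_of_mem hu hxu).symm
    rw [this] at hyu
    exact mem_part_fker.mp hyu

end Stmt10Aux

namespace Stmt10Aux

section Transport

variable {α β : Type*} [Fintype α] [Fintype β] [DecidableEq α] [DecidableEq β]

/-- transport a finpartition of `univ` along an equivalence -/
noncomputable def tmap (e : α ≃ β) (P : Finpartition (Finset.univ : Finset α)) :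
    Finpartition (Finset.univ : Finset β) :=
  Finpartition.ofSetoid (Setoid.ker fun x => P.part (e.symm x))

lemma tmap_mem_part (e : α ≃ β) (P : Finpartition (Finset.univ : Finset α)) {x y : β} :
    y ∈ (tmap e P).part x ↔ P.part (e.symm x) = P.part (e.symm y) :=
  Finpartition.mem_part_ofSetoid_iff_rel

lemma tmap_tmap (e : α ≃ β) (P : Finpartition (Finset.univ : Finset α)) :
    tmap e.symm (tmap e P) = P := by
  refine ext_of_part fun x => Finset.ext fun y => ?_
  rw [tmap_mem_part, Equiv.symm_symm,
    ← (tmap e P).mem_part_iff_part_eq_part (Finset.mem_univ (e x)) (Finset.mem_univ (e y)),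
    tmap_mem_part, Equiv.symm_apply_apply, Equiv.symm_apply_apply,
    P.mem_part_iff_part_eq_part (Finset.mem_univ y) (Finset.mem_univ x),
    ← P.mem_part_iff_part_eq_part (Finset.mem_univ y) (Finset.mem_univ x)]

/-- equivalence of finpartition types along an equivalence of the base types -/
noncomputable def pdEquiv (e : α ≃ β) :
    Finpartition (Finset.univ : Finset α) ≃ Finpartition (Finset.univ : Finset β) where
  toFun := tmap e
  invFun := tmap e.symm
  left_inv := tmap_tmap e
  right_inv P := by
    have := tmap_tmap e.symm P
    rwa [Equiv.symm_symm] at this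

end Transport

end Stmt10Aux

open Stmt10Aux

set_option maxHeartbeats 2000000 in
/-- if `k` is a field and `a + b ≤ n`, the space of `S_n`-equivariant
linear maps `V^{⊗a} → V^{⊗b}` has basis `(T_P)` indexed by the partition diagrams of
type `(a,b)`, and its dimension is the number of set partitions of a set with `a + b`
elements (the Bell number `B(a+b)`). -/
theorem stmt10 (k : Type*) [Field k] (n a b : ℕ) (hn : 0 < n) (hab : a + b ≤ n) :
    (∃ bas : Module.Basis (PartitionDiagram a b) k (equivariantMaps k n a b),
      ∀ P : PartitionDiagram a b,
        (bas P : ((Fin a → Fin n) → k) →ₗ[k] ((Fin b → Fin n) → k)) = TP k n P) ∧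
    Module.finrank k (equivariantMaps k n a b) =
      Nat.card (Finpartition (Finset.univ : Finset (Fin (a + b)))) := by
  have hcard : Fintype.card (Fin a ⊕ Fin b) ≤ n := by simpa using hab
  obtain ⟨rep, hrep⟩ : ∃ rep : PartitionDiagram a b → (Fin a ⊕ Fin b → Fin n),
      ∀ P, fker (rep P) = P := by
    choose rep hrep using fun P : PartitionDiagram a b => exists_rep P hcard
    exact ⟨rep, hrep⟩
  set W := equivariantMaps k n a b with hW
  -- the evaluation map
  set Eval : W →ₗ[k] (PartitionDiagram a b → k) :=
    { toFun := fun F P =>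
        (F : ((Fin a → Fin n) → k) →ₗ[k] ((Fin b → Fin n) → k))
          (delta k n (rep P ∘ Sum.inl)) (rep P ∘ Sum.inr),
      map_add' := fun F G => by funext P; rfl,
      map_smul' := fun c F => by funext P; rfl } with hEval
  -- matrices of equivariant maps are constant on orbits
  have hmat : ∀ (F : W) (σ : Equiv.Perm (Fin n)) (f : Fin a → Fin n) (g : Fin b → Fin n),
      (F : ((Fin a → Fin n) → k) →ₗ[k] ((Fin b → Fin n) → k)) (delta k n (⇑σ ∘ f)) (⇑σ ∘ g)
        = (F : ((Fin a → Fin n) → k) →ₗ[k] ((Fin b → Fin n) → k)) (delta k n f) g := by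
    intro F σ f g
    have h1 := F.2 σ (delta k n f)
    rw [permMap_delta] at h1
    have h2 := congrFun h1 (⇑σ ∘ g)
    rw [h2]
    have h3 : (fun i => σ⁻¹ (σ (g i))) = g := by funext i; simp
    show (F : ((Fin a → Fin n) → k) →ₗ[k] ((Fin b → Fin n) → k)) (delta k n f) (fun i => σ⁻¹ (σ (g i))) = _
    rw [h3]
  have horb : ∀ (F : W) (f : Fin a → Fin n) (g : Fin b → Fin n),
      (F : ((Fin a → Fin n) → k) →ₗ[k] ((Fin b → Fin n) → k)) (delta k n f) g
        = Eval F (fker (Sum.elim f g)) := by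
    intro F f g
    set P := fker (Sum.elim f g) with hP
    have h1 : ∀ x y, rep P x = rep P y ↔ Sum.elim f g x = Sum.elim f g y :=
      fker_eq_iff.mp ((hrep P).trans hP)
    obtain ⟨σ, hσ⟩ := exists_perm h1
    have hf : ⇑σ ∘ (rep P ∘ Sum.inl) = f := by
      funext i; exact congrFun hσ (Sum.inl i)
    have hg : ⇑σ ∘ (rep P ∘ Sum.inr) = g := by
      funext j; exact congrFun hσ (Sum.inr j)
    rw [← hf, ← hg, hmat F σ]
    rfl
  -- injectivity of Eval
  have hinj0 : ∀ F : W, Eval F = 0 → F = 0 := by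
    intro F hF
    have hdelta : ∀ f : Fin a → Fin n,
        (F : ((Fin a → Fin n) → k) →ₗ[k] ((Fin b → Fin n) → k)) (delta k n f) = 0 := by
      intro f
      funext g
      rw [horb F f g, hF]
      rfl
    have hF0 : (F : ((Fin a → Fin n) → k) →ₗ[k] ((Fin b → Fin n) → k)) = 0 := by
      apply LinearMap.ext
      intro x
      conv_lhs => rw [← sum_delta k n x]
      rw [map_sum]
      simp [hdelta]
    exact Subtype.ext hF0
  have hinj : Function.Injective Eval := by
    intro F G h
    have := hinj0 (F - G) (by rw [map_sub Eval F G, h, sub_self])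
    exact sub_eq_zero.mp this
  -- the elementary equivariant maps
  have hEmem : ∀ Q : PartitionDiagram a b,
      matMap k n (fun f g => fker (Sum.elim f g) = Q) ∈ W := by
    intro Q
    refine matMap_mem k n _ fun σ f g => ?_
    have he : Sum.elim (⇑σ ∘ f) (⇑σ ∘ g) = ⇑σ ∘ Sum.elim f g := by
      funext x; cases x <;> rfl
    rw [he, fker_comp]
  set E : PartitionDiagram a b → W :=
    fun Q => ⟨matMap k n (fun f g => fker (Sum.elim f g) = Q), hEmem Q⟩ with hE
  have hEvalE : ∀ Q P, Eval (E Q) P = if P = Q then 1 else 0 := by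
    intro Q P
    show matMap k n (fun f g => fker (Sum.elim f g) = Q) (delta k n (rep P ∘ Sum.inl)) (rep P ∘ Sum.inr) = _
    rw [matMap_delta]
    have h1 : Sum.elim (rep P ∘ Sum.inl) (rep P ∘ Sum.inr) = rep P :=
      Sum.elim_comp_inl_inr (rep P)
    simp only [h1, hrep P]
  -- surjectivity of Eval
  have hsurj : Function.Surjective Eval := by
    intro c
    refine ⟨∑ Q, c Q • E Q, ?_⟩
    rw [map_sum]
    funext P
    rw [Finset.sum_apply]
    simp only [map_smul, Pi.smul_apply, hEvalE, smul_eq_mul, mul_ite, mul_one, mul_zero]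
    rw [Finset.sum_ite_eq Finset.univ P c]
    simp
  set eEquiv : W ≃ₗ[k] (PartitionDiagram a b → k) :=
    LinearEquiv.ofBijective Eval ⟨hinj, hsurj⟩ with heEquiv
  -- TP is equivariant
  have hTPmem : ∀ P : PartitionDiagram a b, TP k n P ∈ W := by
    intro P
    rw [TP_eq_matMap]
    exact matMap_mem k n _ fun σ f g => compatible_perm n σ P f g
  have hEvalT : ∀ P Q, Eval ⟨TP k n P, hTPmem P⟩ Q = if P ≤ Q then 1 else 0 := by
    intro P Q
    show TP k n P (delta k n (rep Q ∘ Sum.inl)) (rep Q ∘ Sum.inr) = _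
    rw [TP_eq_matMap, matMap_delta]
    have h1 : Sum.elim (rep Q ∘ Sum.inl) (rep Q ∘ Sum.inr) = rep Q :=
      Sum.elim_comp_inl_inr (rep Q)
    simp only [compatible_iff_le, h1, hrep Q]
  -- the zeta transform
  set L : (PartitionDiagram a b → k) →ₗ[k] (PartitionDiagram a b → k) :=
    { toFun := fun c Q => ∑ P, if P ≤ Q then c P else 0,
      map_add' := fun c d => by
        funext Q
        simp only [Pi.add_apply]
        rw [← Finset.sum_add_distrib]
        exact Finset.sum_congr rfl fun P _ => by split <;> simp,
      map_smul' := fun r c => by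
        funext Q
        simp only [Pi.smul_apply, smul_eq_mul, RingHom.id_apply]
        rw [Finset.mul_sum]
        exact Finset.sum_congr rfl fun P _ => by split <;> simp } with hL
  have hLinj0 : ∀ c, L c = 0 → c = 0 := by
    intro c hc
    have key : ∀ Q, c Q = 0 := by
      intro Q
      induction Q using WellFoundedLT.induction with
      | _ Q IH =>
        have h0 : (∑ P, if P ≤ Q then c P else 0) = 0 := congrFun hc Q
        rw [Finset.sum_eq_single Q (fun P _ hPQ => by
            by_cases h : P ≤ Q
            · rw [if_pos h, IH P (lt_of_le_of_ne h hPQ)]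
            · rw [if_neg h])
          (fun h => absurd (Finset.mem_univ Q) h)] at h0
        simpa using h0
    funext Q
    exact key Q
  have hLinj : Function.Injective L := by
    intro c d h
    have := hLinj0 (c - d) (by rw [LinearMap.map_sub, h, sub_self])
    exact sub_eq_zero.mp this
  set LEquiv : (PartitionDiagram a b → k) ≃ₗ[k] (PartitionDiagram a b → k) :=
    LinearEquiv.ofBijective L ⟨hLinj, LinearMap.injective_iff_surjective.mp hLinj⟩ with hLEquiv
  set bas : Module.Basis (PartitionDiagram a b) k W :=
    (Pi.basisFun k (PartitionDiagram a b)).map (LEquiv.trans eEquiv.symm) with hbas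
  constructor
  · refine ⟨bas, fun P => ?_⟩
    have hb : bas P = eEquiv.symm (L (Pi.basisFun k (PartitionDiagram a b) P)) := by
      rw [hbas, Module.Basis.map_apply, LinearEquiv.trans_apply]
      rfl
    have hbP : bas P = ⟨TP k n P, hTPmem P⟩ := by
      apply eEquiv.injective
      rw [hb, eEquiv.apply_symm_apply]
      have hco : ∀ x : W, eEquiv x = Eval x := fun x => rfl
      rw [hco]
      funext Q
      rw [hEvalT P Q]
      show (∑ P', if P' ≤ Q then (Pi.basisFun k (PartitionDiagram a b) P) P' else 0) = _
      have h2 : ∀ P' : PartitionDiagram a b,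
          (if P' ≤ Q then (Pi.basisFun k (PartitionDiagram a b) P) P' else 0)
            = if P' = P then (if P' ≤ Q then (1:k) else 0) else 0 := by
        intro P'
        rw [Pi.basisFun_apply, Pi.single_apply]
        by_cases hc1 : P' ≤ Q <;> by_cases hc2 : P' = P <;> simp only [if_pos, if_neg, hc1, hc2, if_true, if_false, ite_true, ite_false]
      simp only [h2]
      rw [Finset.sum_ite_eq' Finset.univ P (fun P' => if P' ≤ Q then (1:k) else 0)]
      simp
    rw [hbP]
  · have h1 : Module.finrank k W = Fintype.card (PartitionDiagram a b) := by
      rw [eEquiv.finrank_eq, Module.finrank_fintype_fun_eq_card]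
    rw [h1, ← Nat.card_eq_fintype_card]
    exact Nat.card_congr (pdEquiv finSumFinEquiv)
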